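/- For any graphs G and H, γ_gr(G ⊠ H) ≤ min{|V(G)|·γ_gr(H), γ_gr(G)·|V(H)|}. -/

import Mathlib

open SimpleGraph

/-- The closed neighborhood of a vertex. -/
def closedNbhd {V : Type*} (G : SimpleGraph V) (v : V) : Set V :=
  insert v (G.neighborSet v)

/-- A legal (closed neighborhood) sequence: distinct vertices, each dominating
a vertex not dominated by its predecessors. -/
def IsLegalSeq {V : Type*} (G : SimpleGraph V) (l : List V) : Prop :=
  l.Nodup ∧ ∀ i : Fin l.length, ∃ u, u ∈ closedNbhd G (l.get i) ∧
    ∀ j : Fin l.length, (j : ℕ) < (i : ℕ) → u ∉ closedNbhd G (l.get j)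

/-- A dominating sequence: a legal sequence whose vertex set dominates the graph. -/
def IsDomSeq {V : Type*} (G : SimpleGraph V) (l : List V) : Prop :=
  IsLegalSeq G l ∧ ∀ v : V, ∃ u ∈ l, v ∈ closedNbhd G u

/-- The Grundy domination number: maximum length of a dominating sequence. -/
noncomputable def grundyDomNum {V : Type*} (G : SimpleGraph V) : ℕ :=
  sSup {n | ∃ l : List V, IsDomSeq G l ∧ l.length = n}

/-- A legal open neighborhood sequence. -/
def IsLegalOpenSeq {V : Type*} (G : SimpleGraph V) (l : List V) : Prop :=
  l.Nodup ∧ ∀ i : Fin l.length, ∃ u, u ∈ G.neighborSet (l.get i) ∧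
    ∀ j : Fin l.length, (j : ℕ) < (i : ℕ) → u ∉ G.neighborSet (l.get j)

/-- A total dominating sequence. -/
def IsTotalDomSeq {V : Type*} (G : SimpleGraph V) (l : List V) : Prop :=
  IsLegalOpenSeq G l ∧ ∀ v : V, ∃ u ∈ l, v ∈ G.neighborSet u

/-- The Grundy total domination number. -/
noncomputable def grundyTotalDomNum {V : Type*} (G : SimpleGraph V) : ℕ :=
  sSup {n | ∃ l : List V, IsTotalDomSeq G l ∧ l.length = n}

/-- The edge clique cover number: minimum size of a family of cliques covering all edges. -/
noncomputable def edgeCliqueCoverNum {V : Type*} (G : SimpleGraph V) : ℕ :=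
  sInf {n | ∃ C : Finset (Set V), C.card = n ∧ (∀ Q ∈ C, G.IsClique Q) ∧
    ∀ u v : V, G.Adj u v → ∃ Q ∈ C, u ∈ Q ∧ v ∈ Q}

/-- The independence number. -/
noncomputable def indepNum {V : Type*} (G : SimpleGraph V) : ℕ :=
  sSup {n | ∃ s : Finset V, (s : Set V).Pairwise (fun u v => ¬ G.Adj u v) ∧ s.card = n}

/-- The lexicographic product of simple graphs. -/
def lexProd {V W : Type*} (G : SimpleGraph V) (H : SimpleGraph W) : SimpleGraph (V × W) where
  Adj x y := G.Adj x.1 y.1 ∨ (x.1 = y.1 ∧ H.Adj x.2 y.2)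
  symm := by
    constructor
    rintro x y (h | ⟨e, h⟩)
    · exact Or.inl h.symm
    · exact Or.inr ⟨e.symm, h.symm⟩
  loopless := by
    constructor
    rintro x (h | ⟨_, h⟩)
    · exact G.loopless.irrefl _ h
    · exact H.loopless.irrefl _ h

/-- The strong product of simple graphs. -/
def strongProd {V W : Type*} (G : SimpleGraph V) (H : SimpleGraph W) : SimpleGraph (V × W) where
  Adj x y := x ≠ y ∧ (x.1 = y.1 ∨ G.Adj x.1 y.1) ∧ (x.2 = y.2 ∨ H.Adj x.2 y.2)
  symm := by
    constructor
    rintro x y ⟨hne, h1, h2⟩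
    refine ⟨hne.symm, ?_, ?_⟩
    · rcases h1 with h | h
      · exact Or.inl h.symm
      · exact Or.inr h.symm
    · rcases h2 with h | h
      · exact Or.inl h.symm
      · exact Or.inr h.symm
  loopless := ⟨fun x h => h.1 rfl⟩

/-- The direct (tensor) product of simple graphs. -/
def directProd {V W : Type*} (G : SimpleGraph V) (H : SimpleGraph W) : SimpleGraph (V × W) where
  Adj x y := G.Adj x.1 y.1 ∧ H.Adj x.2 y.2
  symm := ⟨fun _ _ h => ⟨h.1.symm, h.2.symm⟩⟩
  loopless := ⟨fun x h => G.loopless.irrefl _ h.1⟩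

/-- The boundary of a set of vertices. -/
def boundarySet {V : Type*} (G : SimpleGraph V) (S : Set V) : Set V :=
  {u | u ∉ S ∧ ∃ s ∈ S, G.Adj u s}

/-- `aVal G l` is the number of entries of `l` not adjacent to any earlier entry. -/
def aVal {V : Type*} (G : SimpleGraph V) [DecidableRel G.Adj] (l : List V) : ℕ :=
  (Finset.univ.filter (fun i : Fin l.length =>
    ∀ j : Fin l.length, (j : ℕ) < (i : ℕ) → ¬ G.Adj (l.get j) (l.get i))).card

lemma mem_closedNbhd_iff {V : Type*} (G : SimpleGraph V) (x v : V) :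
    x ∈ closedNbhd G v ↔ x = v ∨ G.Adj v x := by
  simp [closedNbhd]

lemma self_mem_closedNbhd {V : Type*} (G : SimpleGraph V) (v : V) :
    v ∈ closedNbhd G v := Set.mem_insert _ _

lemma mem_closedNbhd_strong {V W : Type*} (G : SimpleGraph V) (H : SimpleGraph W)
    (x v : V × W) :
    x ∈ closedNbhd (strongProd G H) v ↔
      x.1 ∈ closedNbhd G v.1 ∧ x.2 ∈ closedNbhd H v.2 := by
  simp only [mem_closedNbhd_iff]
  simp only [strongProd]
  constructor
  · rintro (rfl | ⟨hne, h1, h2⟩)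
    · exact ⟨Or.inl rfl, Or.inl rfl⟩
    · exact ⟨h1.imp Eq.symm id, h2.imp Eq.symm id⟩
  · rintro ⟨h1, h2⟩
    by_cases hx : x = v
    · exact Or.inl hx
    · exact Or.inr ⟨fun h => hx h.symm, h1.imp Eq.symm id, h2.imp Eq.symm id⟩

/-- Any legal sequence extends to a dominating sequence (finite graphs). -/
lemma exists_domSeq_ge {V : Type*} [Fintype V] (G : SimpleGraph V) :
    ∀ (n : ℕ) (l : List V), Fintype.card V - l.length ≤ n → IsLegalSeq G l →
      ∃ l', IsDomSeq G l' ∧ l.length ≤ l'.length := by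
  classical
  intro n
  induction n with
  | zero =>
    intro l hn hl
    refine ⟨l, ⟨hl, ?_⟩, le_rfl⟩
    have hcard : Fintype.card V ≤ l.length := Nat.le_of_sub_eq_zero (Nat.le_zero.mp hn)
    have hmem : ∀ v : V, v ∈ l := by
      intro v
      have h1 : l.toFinset.card = l.length := List.toFinset_card_of_nodup hl.1
      have h3 : l.toFinset.card ≤ Fintype.card V := Finset.card_le_univ _
      have h2 : l.toFinset = Finset.univ := Finset.eq_univ_of_card _ (by omega)
      rw [← List.mem_toFinset, h2]
      exact Finset.mem_univ v
    intro v
    exact ⟨v, hmem v, self_mem_closedNbhd G v⟩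
  | succ n ih =>
    intro l hn hl
    by_cases hdom : ∀ v : V, ∃ u ∈ l, v ∈ closedNbhd G u
    · exact ⟨l, ⟨hl, hdom⟩, le_rfl⟩
    · push_neg at hdom
      obtain ⟨v, hv⟩ := hdom
      have hvl : v ∉ l := fun h => hv v h (self_mem_closedNbhd G v)
      have hnodup : (l ++ [v]).Nodup := by
        rw [List.nodup_append]
        exact ⟨hl.1, List.nodup_singleton v, fun a ha b hb hab => hvl (by subst hab; rw [List.mem_singleton] at hb; subst hb; exact ha)⟩
      have hlen : (l ++ [v]).length = l.length + 1 := by simp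
      have hlegal : IsLegalSeq G (l ++ [v]) := by
        refine ⟨hnodup, ?_⟩
        intro i
        by_cases hi : (i : ℕ) < l.length
        · obtain ⟨u, hu1, hu2⟩ := hl.2 ⟨i, hi⟩
          refine ⟨u, ?_, ?_⟩
          · have : (l ++ [v]).get i = l.get ⟨i, hi⟩ := by
              simp [List.getElem_append_left hi]
            rwa [this]
          · intro j hj
            have hj' : (j : ℕ) < l.length := lt_trans hj hi
            have : (l ++ [v]).get j = l.get ⟨j, hj'⟩ := by
              simp [List.getElem_append_left hj']
            rw [this]
            exact hu2 ⟨j, hj'⟩ hj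
        · have hi' : (i : ℕ) = l.length := by
            have h2 : (i : ℕ) < l.length + 1 := by simpa using i.2
            omega
          have hget : (l ++ [v]).get i = v := by
            simp [List.get_eq_getElem, hi']
          refine ⟨v, by rw [hget]; exact self_mem_closedNbhd G v, ?_⟩
          intro j hj
          have hj' : (j : ℕ) < l.length := by omega
          have : (l ++ [v]).get j = l.get ⟨j, hj'⟩ := by
            simp [List.getElem_append_left hj']
          rw [this]
          exact hv _ (List.get_mem _ _)
      have hlt : l.length < Fintype.card V := by
        have h1 : l.toFinset.card = l.length := List.toFinset_card_of_nodup hl.1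
        have h2 : l.toFinset ⊂ Finset.univ := by
          refine Finset.ssubset_univ_iff.mpr ?_
          intro h
          exact hvl (by rw [← List.mem_toFinset, h]; exact Finset.mem_univ v)
        have := Finset.card_lt_card h2
        simpa [h1] using this
      obtain ⟨l', hl', hle⟩ := ih (l ++ [v]) (by rw [hlen]; omega) hlegal
      exact ⟨l', hl', le_trans (by simp) hle⟩

lemma legal_length_le_grundy {V : Type*} [Fintype V] (G : SimpleGraph V)
    (l : List V) (hl : IsLegalSeq G l) : l.length ≤ grundyDomNum G := by
  obtain ⟨l', hd, hle⟩ := exists_domSeq_ge G (Fintype.card V) l (Nat.sub_le _ _) hl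
  refine le_trans hle (le_csSup ?_ ⟨l', hd, rfl⟩)
  refine ⟨Fintype.card V, ?_⟩
  rintro n ⟨m, hm, rfl⟩
  exact hm.1.1.length_le_card

lemma proj_legal {V W : Type*} [DecidableEq V] (G : SimpleGraph V) (H : SimpleGraph W)
    (l : List (V × W)) (hl : IsLegalSeq (strongProd G H) l) (g : V) :
    IsLegalSeq H ((l.filter (fun x => x.1 = g)).map Prod.snd) := by
  set m := l.filter (fun x => x.1 = g) with hm
  have hsub : m.Sublist l := List.filter_sublist
  obtain ⟨f, hf⟩ := List.sublist_iff_exists_fin_orderEmbedding_get_eq.mp hsub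
  have hfst : ∀ i : Fin m.length, (m.get i).1 = g := by
    intro i
    have := List.of_mem_filter (List.get_mem m i)
    simpa using this
  constructor
  · refine List.Nodup.map_on ?_ (hl.1.sublist hsub)
    intro x hx y hy hxy
    have hx1 : x.1 = g := by simpa using List.of_mem_filter hx
    have hy1 : y.1 = g := by simpa using List.of_mem_filter hy
    exact Prod.ext (hx1.trans hy1.symm) hxy
  · intro i
    have hlen : (m.map Prod.snd).length = m.length := List.length_map _
    set i' : Fin m.length := ⟨i, by omega⟩ with hi'
    obtain ⟨u, hu1, hu2⟩ := hl.2 (f i')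
    rw [← hf i'] at hu1
    have hu1' := (mem_closedNbhd_strong G H u (m.get i')).mp hu1
    refine ⟨u.2, ?_, ?_⟩
    · have hget : (m.map Prod.snd).get i = (m.get i').2 := by
        simp [hi', List.get_eq_getElem]
      rw [hget]
      exact hu1'.2
    · intro j hj hmem
      set j' : Fin m.length := ⟨j, by omega⟩ with hj'
      have hget : (m.map Prod.snd).get j = (m.get j').2 := by
        simp [hj', List.get_eq_getElem]
      rw [hget] at hmem
      refine hu2 (f j') ?_ ?_
      · exact_mod_cast f.strictMono (show j' < i' from hj)
      · rw [← hf j']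
        refine (mem_closedNbhd_strong G H u (m.get j')).mpr ⟨?_, hmem⟩
        rw [hfst j', ← hfst i']
        exact hu1'.1

lemma sum_filter_length {V W : Type*} [Fintype V] [DecidableEq V] (l : List (V × W)) :
    ∑ g : V, (l.filter (fun x => x.1 = g)).length = l.length := by
  induction l with
  | nil => simp
  | cons x l ih =>
    have key : ∀ g : V, ((x :: l).filter (fun y => y.1 = g)).length =
        (if x.1 = g then 1 else 0) + (l.filter (fun y => y.1 = g)).length := by
      intro g
      by_cases h : x.1 = g <;> simp [List.filter_cons, h] <;> omega
    rw [Finset.sum_congr rfl (fun g _ => key g), Finset.sum_add_distrib, ih,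
      Finset.sum_ite_eq]
    simp
    omega

lemma domSeq_length_le {V W : Type*} [Fintype V] [Fintype W]
    (G : SimpleGraph V) (H : SimpleGraph W) (l : List (V × W))
    (hl : IsDomSeq (strongProd G H) l) :
    l.length ≤ Fintype.card V * grundyDomNum H := by
  classical
  rw [← sum_filter_length l]
  calc ∑ g : V, (l.filter (fun x => x.1 = g)).length
      ≤ ∑ _g : V, grundyDomNum H := by
        refine Finset.sum_le_sum ?_
        intro g _
        have := legal_length_le_grundy H _ (proj_legal G H l hl.1 g)
        simpa using this
    _ = Fintype.card V * grundyDomNum H := by simp [Finset.sum_const, mul_comm]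

lemma domSeq_swap {V W : Type*} (G : SimpleGraph V) (H : SimpleGraph W)
    (l : List (V × W)) (hl : IsDomSeq (strongProd G H) l) :
    IsDomSeq (strongProd H G) (l.map Prod.swap) := by
  have key : ∀ (x v : V × W), x.swap ∈ closedNbhd (strongProd H G) v.swap ↔
      x ∈ closedNbhd (strongProd G H) v := by
    intro x v
    rw [mem_closedNbhd_strong, mem_closedNbhd_strong]
    exact and_comm
  refine ⟨⟨?_, ?_⟩, ?_⟩
  · exact hl.1.1.map (Prod.swap_injective)
  · intro i
    have hlen : (l.map Prod.swap).length = l.length := List.length_map _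
    set i' : Fin l.length := ⟨i, by omega⟩ with hi'
    obtain ⟨u, hu1, hu2⟩ := hl.1.2 i'
    have hget : ∀ k : Fin (l.map Prod.swap).length,
        (l.map Prod.swap).get k = (l.get ⟨k, by omega⟩).swap := by
      intro k; simp [List.get_eq_getElem]
    refine ⟨u.swap, ?_, ?_⟩
    · rw [hget i, key]
      exact hu1
    · intro j hj hmem
      rw [hget j, key] at hmem
      exact hu2 ⟨j, by omega⟩ hj hmem
  · intro v
    obtain ⟨u, hu1, hu2⟩ := hl.2 v.swap
    refine ⟨u.swap, List.mem_map_of_mem hu1, ?_⟩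
    have := (key v.swap u).mpr hu2
    simpa using this

theorem stmt_18 {V W : Type*} [Fintype V] [Fintype W]
    (G : SimpleGraph V) (H : SimpleGraph W) :
    grundyDomNum (strongProd G H) ≤
      min (Fintype.card V * grundyDomNum H) (grundyDomNum G * Fintype.card W) := by
  refine le_min ?_ ?_ <;> refine csSup_le' ?_ <;> rintro n ⟨l, hl, rfl⟩
  · exact domSeq_length_le G H l hl
  · have h := domSeq_length_le H G (l.map Prod.swap) (domSeq_swap G H l hl)
    rw [List.length_map] at h
    rwa [mul_comm] at h
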